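/- In the two-cell affine OCV-R parallel system with constant applied current I, initial SOCs z_{1,0}, z_{2,0}, and Δz(t) = Δz_0·e^{−t/τ} + κ·(1 − e^{−t/τ})·I where Δz_0 = z_{2,0} − z_{1,0}, the solution of the coupled SOC dynamics is z_1(t) = (Q1·z_{1,0} + Q2·z_{2,0} − I·t)/Q_tot − (Q2/Q_tot)·Δz(t) and z_2(t) = (Q1·z_{1,0} + Q2·z_{2,0} − I·t)/Q_tot + (Q1/Q_tot)·Δz(t); i.e., these formulas give the unique solution of the system z_1' = (α·(z_2 − z_1) − R2·I)/(Q1·R_tot), z_2' = (−α·(z_2 − z_1) − R1·I)/(Q2·R_tot) with the given initial conditions. -/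

import Mathlib

/-- Unique solution of the coupled SOC dynamics of the two-cell affine OCV-R parallel
system under constant applied current `I`. -/
theorem stmt3 (Q1 Q2 R1 R2 α β I z10 z20 : ℝ)
    (hQ1 : 0 < Q1) (hQ2 : 0 < Q2) (hR1 : 0 < R1) (hR2 : 0 < R2)
    (hα : 0 < α) (hβ : 0 < β)
    (τ κ : ℝ)
    (hτ : τ = ((R1 + R2) / α) * (Q1 * Q2 / (Q1 + Q2)))
    (hκ : κ = (R2 * Q2 - R1 * Q1) / (α * (Q1 + Q2)))
    (Δz : ℝ → ℝ)
    (hΔz : ∀ t, Δz t = (z20 - z10) * Real.exp (-t / τ) + κ * (1 - Real.exp (-t / τ)) * I)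
    (z1 z2 : ℝ → ℝ)
    (hz1d : ∀ t, HasDerivAt z1 ((α * (z2 t - z1 t) - R2 * I) / (Q1 * (R1 + R2))) t)
    (hz2d : ∀ t, HasDerivAt z2 ((-(α * (z2 t - z1 t)) - R1 * I) / (Q2 * (R1 + R2))) t)
    (hz10 : z1 0 = z10) (hz20 : z2 0 = z20) :
    ∀ t, 0 ≤ t →
      z1 t = (Q1 * z10 + Q2 * z20 - I * t) / (Q1 + Q2) - (Q2 / (Q1 + Q2)) * Δz t ∧
      z2 t = (Q1 * z10 + Q2 * z20 - I * t) / (Q1 + Q2) + (Q1 / (Q1 + Q2)) * Δz t := by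
  have hQt : 0 < Q1 + Q2 := by linarith
  have hRt : 0 < R1 + R2 := by linarith
  have hτpos : 0 < τ := by
    rw [hτ]; positivity
  have hτne : τ ≠ 0 := ne_of_gt hτpos
  -- difference w = z2 - z1
  set w : ℝ → ℝ := fun t => z2 t - z1 t with hw
  have hwd : ∀ t, HasDerivAt w ((κ * I - w t) / τ) t := by
    intro t
    have h := (hz2d t).sub (hz1d t)
    refine h.congr_deriv ?_
    rw [hτ, hκ]
    field_simp
    ring
  -- integrating factor
  have hg : ∀ t, HasDerivAt (fun t => (w t - κ * I) * Real.exp (t / τ)) 0 t := by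
    intro t
    have he : HasDerivAt (fun t : ℝ => Real.exp (t / τ)) (Real.exp (t / τ) * (1 / τ)) t := by
      have : HasDerivAt (fun t : ℝ => t / τ) (1 / τ) t := (hasDerivAt_id t).div_const τ
      exact (Real.hasDerivAt_exp (t / τ)).comp t this
    have h := ((hwd t).sub_const (κ * I)).mul he
    refine h.congr_deriv ?_
    field_simp
    ring
  have hgconst : ∀ t : ℝ, (w t - κ * I) * Real.exp (t / τ) = (w 0 - κ * I) := by
    have hc : ∀ t : ℝ, (w t - κ * I) * Real.exp (t / τ)
        = (w 0 - κ * I) * Real.exp ((0:ℝ) / τ) := by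
      intro t
      have := is_const_of_deriv_eq_zero (f := fun t => (w t - κ * I) * Real.exp (t / τ))
        (fun x => (hg x).differentiableAt) (fun x => (hg x).deriv) t 0
      exact this
    intro t
    simpa using hc t
  have hwval : ∀ t : ℝ, w t = Δz t := by
    intro t
    have h := hgconst t
    have hexp : Real.exp (t / τ) ≠ 0 := Real.exp_ne_zero _
    have hw0 : w 0 = z20 - z10 := by simp [hw, hz10, hz20]
    have hneg : Real.exp (-t / τ) = (Real.exp (t / τ))⁻¹ := by
      rw [← Real.exp_neg]; ring_nf
    rw [hΔz, hneg, ← hw0]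
    field_simp at h ⊢
    linarith [h]
  -- weighted sum
  have hsd : ∀ t, HasDerivAt (fun t => Q1 * z1 t + Q2 * z2 t + I * t) 0 t := by
    intro t
    have h := (((hz1d t).const_mul Q1).add ((hz2d t).const_mul Q2)).add
      ((hasDerivAt_id t).const_mul I)
    refine h.congr_deriv ?_
    field_simp
    ring
  have hsconst : ∀ t : ℝ, Q1 * z1 t + Q2 * z2 t + I * t = Q1 * z10 + Q2 * z20 := by
    intro t
    have := is_const_of_deriv_eq_zero (f := fun t => Q1 * z1 t + Q2 * z2 t + I * t)
      (fun x => (hsd x).differentiableAt) (fun x => (hsd x).deriv) t 0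
    simpa [hz10, hz20] using this
  intro t _
  have hs := hsconst t
  have hwv := hwval t
  have hwv' : z2 t - z1 t = Δz t := hwv
  constructor
  · field_simp
    linear_combination hs - Q2 * hwv'
  · field_simp
    linear_combination hs + Q1 * hwv'
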